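/- arXiv:2104.01675 — 5 statements merged into one kernel-verified Lean document; each statement's English description precedes it below -/
import Mathlib

section
/- Let H, γ, h, κ₁, κ₂, t be real numbers satisfying H > 0, γ > 0, 2γH < 1, h > H/2, γh < 1, κ₁ + κ₂ = h, κ₁ ≤ h/2 ≤ κ₂, t ≥ 2γ, and tκ₂ < 1. Then κ₁/(1 − tκ₁) + κ₂/(1 − tκ₂) − h ≥ γH² / (4(2 − γH)). -/
/-- **Quantitative core of the distance estimate for `H`-surfaces (proof of
Theorem 1.7).** Let `H, γ, h, κ₁, κ₂, t` be real numbers with `H > 0`, `γ > 0`,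
`2γH < 1`, `h > H/2`, `γh < 1`, `κ₁ + κ₂ = h`, `κ₁ ≤ h/2 ≤ κ₂`, `t ≥ 2γ` and
`tκ₂ < 1`.  Then `κ₁/(1-tκ₁) + κ₂/(1-tκ₂) - h ≥ γH²/(4(2-γH))`. -/
theorem distance_estimate_H_surfaces
    (H γ h κ₁ κ₂ t : ℝ)
    (hH : 0 < H) (hγ : 0 < γ) (hγH : 2 * γ * H < 1)
    (hh : H / 2 < h) (hγh : γ * h < 1)
    (hsum : κ₁ + κ₂ = h) (hk1 : κ₁ ≤ h / 2) (hk2 : h / 2 ≤ κ₂)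
    (ht : 2 * γ ≤ t) (htk : t * κ₂ < 1) :
    γ * H ^ 2 / (4 * (2 - γ * H)) ≤ κ₁ / (1 - t * κ₁) + κ₂ / (1 - t * κ₂) - h := by
  have ht0 : 0 < t := lt_of_lt_of_le (by linarith) ht
  have hh0 : 0 < h := by linarith
  have hκ2 : 0 < κ₂ := by linarith
  have htk1 : t * κ₁ ≤ t * κ₂ := by nlinarith
  have hA : 0 < 1 - t * κ₁ := by linarith
  have hB : 0 < 1 - t * κ₂ := by linarith
  -- κ₁ ≤ κ₁/(1-tκ₁)
  have h1 : κ₁ ≤ κ₁ / (1 - t * κ₁) := by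
    rw [le_div_iff₀ hA]
    nlinarith [sq_nonneg κ₁]
  -- κ₂/(1-tκ₂) = κ₂ + tκ₂²/(1-tκ₂)
  have h2 : κ₂ + t * κ₂ ^ 2 / (1 - t * κ₂) = κ₂ / (1 - t * κ₂) := by
    rw [eq_div_iff hB.ne', add_mul, div_mul_cancel₀ _ hB.ne']
    ring
  -- tκ₂² ≥ γh²/2 and 1-tκ₂ ≤ 1-γh
  have h3 : γ * h ^ 2 / 2 ≤ t * κ₂ ^ 2 := by
    nlinarith [mul_nonneg (show (0:ℝ) ≤ t - 2 * γ by linarith) (sq_nonneg κ₂),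
      mul_nonneg hγ.le (mul_nonneg (show (0:ℝ) ≤ κ₂ - h / 2 by linarith) (show (0:ℝ) ≤ κ₂ + h / 2 by linarith))]
  have h3' : 1 - t * κ₂ ≤ 1 - γ * h := by nlinarith
  have hD : 0 < 1 - γ * h := by linarith
  have h4 : γ * h ^ 2 / 2 / (1 - γ * h) ≤ t * κ₂ ^ 2 / (1 - t * κ₂) :=
    div_le_div₀ (by positivity) h3 hB h3'
  have h5 : γ * H ^ 2 / (4 * (2 - γ * H)) ≤ γ * h ^ 2 / 2 / (1 - γ * h) := by
    rw [div_le_div_iff₀ (by nlinarith) hD]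
    nlinarith [mul_pos (show (0:ℝ) < 2 * h - H by linarith)
      (show (0:ℝ) < 2 * h + H - γ * H * h by nlinarith), hγ.le, sq_nonneg H]
  linarith
end

section
/- For all real numbers r₁, r₂ with 0 < r₁ < r₂ and every real number x, one has e^{r₁ x} + e^{(r₁ − r₂) x} ≥ 1. Consequently, the Weierstrass-type minimal immersion with data f(z) = (2/√π) e^{r₁ z²} and g(z) = e^{−r₂ z²} has induced metric ds = (1/2)|f|(1 + |g|)|dz| = (1/√π)( e^{r₁ Re(z²)} + e^{(r₁−r₂) Re(z²)} )|dz| ≥ (1/√π)|dz| on ℂ, hence is geodesically complete. -/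
open Real Filter

/-- **Completeness of the minimal surface of the Appendix (Example A.2).**
For `0 < r₁ < r₂` and every real `x` one has `e^{r₁ x} + e^{(r₁-r₂) x} ≥ 1`.
Consequently the Weierstrass-type minimal immersion with data
`f(z) = (2/√π) e^{r₁ z²}`, `g(z) = e^{-r₂ z²}` has induced conformal metric
`ds = λ |dz|` with conformal factor
`λ(z) = (1/√π)(e^{r₁ Re(z²)} + e^{(r₁-r₂) Re(z²)}) ≥ 1/√π` on `ℂ`, hence it is
geodesically complete: every `C¹` curve in `ℂ` which escapes to infinity has
infinite length in the metric `ds`. -/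
theorem weierstrass_metric_complete (r₁ r₂ : ℝ) (h1 : 0 < r₁) (h12 : r₁ < r₂) :
    (∀ x : ℝ, 1 ≤ Real.exp (r₁ * x) + Real.exp ((r₁ - r₂) * x)) ∧
    (∀ z : ℂ, 1 / Real.sqrt π ≤
      1 / Real.sqrt π * (Real.exp (r₁ * (z ^ 2).re) + Real.exp ((r₁ - r₂) * (z ^ 2).re))) ∧
    (∀ γ γ' : ℝ → ℂ, (∀ t, HasDerivAt γ (γ' t) t) → Continuous γ' →
      Tendsto (fun t => ‖γ t‖) atTop atTop →
      Tendsto (fun T => ∫ t in (0:ℝ)..T,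
          1 / Real.sqrt π *
            (Real.exp (r₁ * ((γ t) ^ 2).re) + Real.exp ((r₁ - r₂) * ((γ t) ^ 2).re)) *
            ‖γ' t‖)
        atTop atTop) := by
  have key : ∀ x : ℝ, 1 ≤ Real.exp (r₁ * x) + Real.exp ((r₁ - r₂) * x) := by
    intro x
    rcases le_or_gt 0 x with hx | hx
    · have : 1 ≤ Real.exp (r₁ * x) := Real.one_le_exp (by positivity)
      nlinarith [Real.exp_pos ((r₁ - r₂) * x)]
    · have : 1 ≤ Real.exp ((r₁ - r₂) * x) :=
        Real.one_le_exp (by nlinarith)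
      nlinarith [Real.exp_pos (r₁ * x)]
  have hc : (0 : ℝ) < 1 / Real.sqrt π := by positivity
  refine ⟨key, fun z => ?_, ?_⟩
  · nth_rewrite 1 [← mul_one (1 / Real.sqrt π)]
    exact mul_le_mul_of_nonneg_left (key _) hc.le
  · intro γ γ' hderiv hcont htend
    set c : ℝ := 1 / Real.sqrt π
    have hγc : Continuous γ := by
      rw [continuous_iff_continuousAt]; exact fun t => (hderiv t).continuousAt
    have hintc : Continuous fun t =>
        c * (Real.exp (r₁ * ((γ t) ^ 2).re) + Real.exp ((r₁ - r₂) * ((γ t) ^ 2).re)) *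
          ‖γ' t‖ := by
      have : Continuous fun t => ‖γ' t‖ := hcont.norm
      fun_prop
    have hg : Tendsto (fun T => c * (‖γ T‖ - ‖γ 0‖)) atTop atTop := by
      apply Tendsto.const_mul_atTop hc
      simpa [sub_eq_add_neg] using tendsto_atTop_add_const_right atTop (-‖γ 0‖) htend
    apply tendsto_atTop_mono' atTop _ hg
    filter_upwards [eventually_ge_atTop (0 : ℝ)] with T hT
    have hint' : IntervalIntegrable γ' MeasureTheory.volume 0 T :=
      hcont.intervalIntegrable 0 T
    have hftc : ∫ t in (0:ℝ)..T, γ' t = γ T - γ 0 :=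
      intervalIntegral.integral_eq_sub_of_hasDerivAt (fun t _ => hderiv t) hint'
    have hnorm : ‖γ T - γ 0‖ ≤ ∫ t in (0:ℝ)..T, ‖γ' t‖ := by
      rw [← hftc]
      exact intervalIntegral.norm_integral_le_integral_norm hT
    have step1 : c * ‖γ T - γ 0‖ ≤ ∫ t in (0:ℝ)..T, c * ‖γ' t‖ := by
      rw [intervalIntegral.integral_const_mul]
      exact mul_le_mul_of_nonneg_left hnorm hc.le
    have step2 : (∫ t in (0:ℝ)..T, c * ‖γ' t‖) ≤ ∫ t in (0:ℝ)..T,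
        c * (Real.exp (r₁ * ((γ t) ^ 2).re) + Real.exp ((r₁ - r₂) * ((γ t) ^ 2).re)) *
          ‖γ' t‖ := by
      apply intervalIntegral.integral_mono_on hT
        ((continuous_const.mul hcont.norm).intervalIntegrable 0 T)
        (hintc.intervalIntegrable 0 T)
      intro t _
      have : c * 1 * ‖γ' t‖ ≤
          c * (Real.exp (r₁ * ((γ t) ^ 2).re) + Real.exp ((r₁ - r₂) * ((γ t) ^ 2).re)) *
            ‖γ' t‖ := by
        apply mul_le_mul_of_nonneg_right _ (norm_nonneg _)
        exact mul_le_mul_of_nonneg_left (key _) hc.le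
      rw [mul_one] at this; exact this
    have habs : ‖γ T‖ - ‖γ 0‖ ≤ ‖γ T - γ 0‖ := by
      simpa using norm_sub_norm_le (γ T) (γ 0)
    calc c * (‖γ T‖ - ‖γ 0‖)
        ≤ c * ‖γ T - γ 0‖ := mul_le_mul_of_nonneg_left habs hc.le
      _ ≤ _ := step1.trans step2
end

section
/- Let 0 < r₁ < r₂ and define K: ℂ → ℝ by K(z) = −[ 4√π r₂ |z| / ( e^{((r₁+r₂)/2) Re(z²)} + e^{−((3r₂−r₁)/2) Re(z²)} )² ]². Then for every t > 0 and every k ∈ {1, 3, 5, 7}, K(t e^{ikπ/4}) = −π r₂² t². In particular, K(t e^{ikπ/4}) → −∞ as t → ∞ along each of these four diagonal rays. -/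
open Real Filter

/-- The Gaussian curvature of the complete minimal immersion `χ : ℂ → ℝ³` with
Weierstrass data `f(z) = (2/√π) e^{r₁ z²}`, `g(z) = e^{-r₂ z²}` (Example A.2). -/
noncomputable def gaussCurvWeierstrass (r₁ r₂ : ℝ) (z : ℂ) : ℝ :=
  -(4 * Real.sqrt π * r₂ * ‖z‖ /
      (Real.exp ((r₁ + r₂) / 2 * (z ^ 2).re) +
        Real.exp (-((3 * r₂ - r₁) / 2) * (z ^ 2).re)) ^ 2) ^ 2

lemma resq_aux (t c : ℝ) :
    (((t : ℂ) * Complex.exp ((c : ℂ) * Complex.I)) ^ 2).re = t ^ 2 * Real.cos (2 * c) := by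
  have h : (Complex.exp ((c : ℂ) * Complex.I)) ^ 2
      = Complex.exp ((↑(2 * c) : ℂ) * Complex.I) := by
    rw [sq, ← Complex.exp_add]; push_cast; ring_nf
  have h2 : ((t : ℂ) ^ 2) = ((t ^ 2 : ℝ) : ℂ) := by push_cast; ring
  rw [mul_pow, h2, h, Complex.mul_re, Complex.exp_ofReal_mul_I_re,
    Complex.exp_ofReal_mul_I_im, Complex.ofReal_re, Complex.ofReal_im]
  ring

lemma gauss_ray_key (r₁ r₂ : ℝ) (hr₂ : 0 < r₂) (c : ℝ) (hc : Real.cos (2 * c) = 0) :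
    (∀ t : ℝ, 0 < t →
        gaussCurvWeierstrass r₁ r₂ ((t : ℂ) * Complex.exp ((c : ℂ) * Complex.I)) =
          -(π * r₂ ^ 2 * t ^ 2)) ∧
      Tendsto (fun t : ℝ =>
          gaussCurvWeierstrass r₁ r₂ ((t : ℂ) * Complex.exp ((c : ℂ) * Complex.I)))
        atTop atBot := by
  have heq : ∀ t : ℝ, 0 < t →
      gaussCurvWeierstrass r₁ r₂ ((t : ℂ) * Complex.exp ((c : ℂ) * Complex.I)) =
        -(π * r₂ ^ 2 * t ^ 2) := by
    intro t ht
    unfold gaussCurvWeierstrass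
    rw [resq_aux, hc, mul_zero, mul_zero, mul_zero, Real.exp_zero]
    have habs : ‖(t : ℂ) * Complex.exp ((c : ℂ) * Complex.I)‖ = t := by
      rw [norm_mul, Complex.norm_exp_ofReal_mul_I, Complex.norm_real, Real.norm_eq_abs, abs_of_pos ht, mul_one]
    rw [habs]
    have hd : 4 * Real.sqrt π * r₂ * t / ((1 : ℝ) + 1) ^ 2 = Real.sqrt π * r₂ * t := by
      ring
    rw [hd]
    have hs : Real.sqrt π ^ 2 = π := Real.sq_sqrt Real.pi_pos.le
    rw [show (Real.sqrt π * r₂ * t) ^ 2 = Real.sqrt π ^ 2 * (r₂ ^ 2 * t ^ 2) by ring, hs]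
    ring
  refine ⟨heq, ?_⟩
  have h2 : Tendsto (fun t : ℝ => t ^ 2) atTop atTop := tendsto_pow_atTop two_ne_zero
  have h3 : Tendsto (fun t : ℝ => π * r₂ ^ 2 * t ^ 2) atTop atTop :=
    h2.const_mul_atTop (by positivity)
  have h4 : Tendsto (fun t : ℝ => -(π * r₂ ^ 2 * t ^ 2)) atTop atBot :=
    tendsto_neg_atTop_atBot.comp h3
  refine h4.congr' ?_
  filter_upwards [eventually_gt_atTop (0 : ℝ)] with t ht
  exact (heq t ht).symm

/-- **Unbounded curvature along the diagonal rays (Example A.2).**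
For `0 < r₁ < r₂`, along each diagonal ray `t ↦ t e^{ikπ/4}` (`k = 1, 3, 5, 7`,
`t > 0`) the Gaussian curvature satisfies `K(t e^{ikπ/4}) = -π r₂² t²`; in
particular `K(t e^{ikπ/4}) → -∞` as `t → ∞`. -/
theorem gaussCurv_on_diagonal_rays (r₁ r₂ : ℝ) (h1 : 0 < r₁) (h12 : r₁ < r₂) :
    ∀ k ∈ ({1, 3, 5, 7} : Set ℕ),
      (∀ t : ℝ, 0 < t →
        gaussCurvWeierstrass r₁ r₂ (t * Complex.exp (k * π * Complex.I / 4)) =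
          -(π * r₂ ^ 2 * t ^ 2)) ∧
      Tendsto (fun t : ℝ =>
          gaussCurvWeierstrass r₁ r₂ (t * Complex.exp (k * π * Complex.I / 4)))
        atTop atBot := by
  have hr₂ : 0 < r₂ := lt_trans h1 h12
  intro k hk
  have harg : (k : ℂ) * ↑π * Complex.I / 4 = ((k * π / 4 : ℝ) : ℂ) * Complex.I := by
    push_cast; ring
  simp only [harg]
  apply gauss_ray_key r₁ r₂ hr₂
  -- cos (2 * (k * π / 4)) = 0 for k = 1, 3, 5, 7
  rcases hk with rfl | rfl | rfl | rfl
  · rw [Real.cos_eq_zero_iff]; exact ⟨0, by push_cast; ring⟩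
  · rw [Real.cos_eq_zero_iff]; exact ⟨1, by push_cast; ring⟩
  · rw [Real.cos_eq_zero_iff]; exact ⟨2, by push_cast; ring⟩
  · rw [Real.cos_eq_zero_iff]; exact ⟨3, by push_cast; ring⟩
end

section
/- Let 0 < r₁ < r₂, let 0 < ε < π/8, and define K: ℂ → ℝ by K(z) = −[ 4√π r₂ |z| / ( e^{((r₁+r₂)/2) Re(z²)} + e^{−((3r₂−r₁)/2) Re(z²)} )² ]². If θ ∈ [0, 2π) satisfies |cos(2θ)| ≥ sin(2ε) (equivalently θ lies outside the ε-neighborhoods of the angles (2i−1)π/4, i = 1,…,4), then for every t > 0 one has K(t e^{iθ}) > −A t² e^{−B t²}, where A = 16π r₂² and B = (r₁ + r₂) cos(π/2 − 2ε) = (r₁+r₂) sin(2ε). In particular K is bounded away from the four diagonal directions. -/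
open Real Filter

/-- **Curvature decay away from the diagonal directions (Example A.2).**
Let `0 < r₁ < r₂` and `0 < ε < π/8`.  If `θ ∈ [0, 2π)` satisfies
`|cos(2θ)| ≥ sin(2ε)` (i.e. `θ` lies outside the `ε`-neighborhoods of the angles
`(2i-1)π/4`), then for every `t > 0`,
`K(t e^{iθ}) > -A t² e^{-B t²}` with `A = 16π r₂²` and
`B = (r₁ + r₂) cos(π/2 - 2ε) = (r₁ + r₂) sin(2ε)`. -/
theorem gaussCurv_bound_off_diagonal (r₁ r₂ ε : ℝ) (h1 : 0 < r₁) (h12 : r₁ < r₂)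
    (hε0 : 0 < ε) (hε : ε < π / 8)
    (θ : ℝ) (hθ : θ ∈ Set.Ico 0 (2 * π)) (hcos : Real.sin (2 * ε) ≤ |Real.cos (2 * θ)|)
    (t : ℝ) (ht : 0 < t) :
    -(16 * π * r₂ ^ 2) * t ^ 2 *
        Real.exp (-((r₁ + r₂) * Real.cos (π / 2 - 2 * ε)) * t ^ 2) <
      gaussCurvWeierstrass r₁ r₂ (t * Complex.exp (θ * Complex.I)) := by
  have hπ : (0:ℝ) < π := Real.pi_pos
  have hr2 : 0 < r₂ := h1.trans h12
  have hsin : 0 < Real.sin (2 * ε) := by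
    apply Real.sin_pos_of_pos_of_lt_pi (by linarith)
    nlinarith
  have hBrw : Real.cos (π / 2 - 2 * ε) = Real.sin (2 * ε) := Real.cos_pi_div_two_sub _
  rw [hBrw]
  set s := Real.sin (2 * ε) with hs
  have habs : ‖(t:ℂ) * Complex.exp (θ * Complex.I)‖ = t := by
    rw [norm_mul, Complex.norm_exp]
    simp [abs_of_pos ht]
  have hre : (((t:ℂ) * Complex.exp (θ * Complex.I)) ^ 2).re = t ^ 2 * Real.cos (2 * θ) := by
    have h2 : ((t:ℂ) * Complex.exp (θ * Complex.I)) ^ 2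
        = (t:ℂ) ^ 2 * Complex.exp ((2 * θ : ℝ) * Complex.I) := by
      rw [mul_pow, ← Complex.exp_nat_mul]
      push_cast
      ring_nf
    rw [h2]
    have : ((t:ℂ) ^ 2) = ((t ^ 2 : ℝ) : ℂ) := by push_cast; ring
    rw [this, Complex.re_ofReal_mul, Complex.exp_ofReal_mul_I_re]
  unfold gaussCurvWeierstrass
  rw [habs, hre]
  set a := (r₁ + r₂) / 2 with ha
  set b := (3 * r₂ - r₁) / 2 with hb
  have ha0 : 0 < a := by rw [ha]; linarith
  have hab : a ≤ b := by rw [ha, hb]; linarith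
  set u := t ^ 2 * Real.cos (2 * θ) with hu
  set D := Real.exp (a * u) + Real.exp (-b * u) with hD
  have hD0 : 0 < D := by positivity
  have hkey : Real.exp (a * (s * t ^ 2)) < D := by
    rcases le_or_gt 0 (Real.cos (2 * θ)) with h | h
    · have hsc : s ≤ Real.cos (2 * θ) := by rwa [abs_of_nonneg h] at hcos
      have h1 : a * (s * t ^ 2) ≤ a * u := by
        rw [hu]
        have hxy : s * t ^ 2 ≤ t ^ 2 * Real.cos (2 * θ) := by
          nlinarith [mul_le_mul_of_nonneg_left hsc (sq_nonneg t)]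
        exact mul_le_mul_of_nonneg_left hxy ha0.le
      calc Real.exp (a * (s * t ^ 2)) ≤ Real.exp (a * u) := Real.exp_le_exp.2 h1
        _ < D := by rw [hD]; linarith [Real.exp_pos (-b * u)]
    · have hsc : s ≤ -Real.cos (2 * θ) := by rwa [abs_of_neg h] at hcos
      have h1 : a * (s * t ^ 2) ≤ -b * u := by
        rw [hu]
        have h0 : a * s ≤ b * (-Real.cos (2 * θ)) :=
          mul_le_mul hab hsc hsin.le (ha0.le.trans hab)
        nlinarith [mul_le_mul_of_nonneg_right h0 (sq_nonneg t)]
      calc Real.exp (a * (s * t ^ 2)) ≤ Real.exp (-b * u) := Real.exp_le_exp.2 h1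
        _ < D := by rw [hD]; linarith [Real.exp_pos (a * u)]
  have hD4 : Real.exp ((r₁ + r₂) * s * t ^ 2) < D ^ 4 := by
    have h4 : Real.exp (a * (s * t ^ 2)) ^ 4 ≤ D ^ 4 := by
      apply pow_le_pow_left₀ (Real.exp_nonneg _) hkey.le
    have heq : Real.exp (a * (s * t ^ 2)) ^ 4 = Real.exp (4 * (a * (s * t ^ 2))) := by
      rw [← Real.exp_nat_mul]; norm_num
    have hmono : Real.exp ((r₁ + r₂) * s * t ^ 2) < Real.exp (4 * (a * (s * t ^ 2))) := by
      apply Real.exp_lt_exp.2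
      rw [ha]; nlinarith [sq_nonneg t, mul_pos hsin (pow_pos ht 2)]
    calc Real.exp ((r₁ + r₂) * s * t ^ 2) < Real.exp (a * (s * t ^ 2)) ^ 4 := by
          rw [heq]; exact hmono
      _ ≤ D ^ 4 := h4
  have hC : 0 < 16 * π * r₂ ^ 2 * t ^ 2 := by positivity
  have hnum : (4 * Real.sqrt π * r₂ * t) ^ 2 = 16 * π * r₂ ^ 2 * t ^ 2 := by
    have hsq : Real.sqrt π * Real.sqrt π = π := Real.mul_self_sqrt hπ.le
    nlinarith [hsq]
  have hRHS : -(4 * Real.sqrt π * r₂ * t / D ^ 2) ^ 2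
      = -(16 * π * r₂ ^ 2 * t ^ 2 / D ^ 4) := by
    rw [div_pow, hnum, show ((D ^ 2) ^ 2 : ℝ) = D ^ 4 by ring]
  rw [hRHS]
  have hE : Real.exp (-((r₁ + r₂) * s) * t ^ 2)
      = (Real.exp ((r₁ + r₂) * s * t ^ 2))⁻¹ := by
    rw [← Real.exp_neg]; ring_nf
  have hgoal : 16 * π * r₂ ^ 2 * t ^ 2 / D ^ 4
      < 16 * π * r₂ ^ 2 * t ^ 2 / Real.exp ((r₁ + r₂) * s * t ^ 2) := by
    exact div_lt_div_of_pos_left hC (Real.exp_pos _) hD4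
  have : -(16 * π * r₂ ^ 2) * t ^ 2 * Real.exp (-((r₁ + r₂) * s) * t ^ 2)
      = -(16 * π * r₂ ^ 2 * t ^ 2 / Real.exp ((r₁ + r₂) * s * t ^ 2)) := by
    rw [hE]; ring
  rw [this]
  linarith
end

section
/- Let 0 < r₁ < r₂. Then the improper integral ∫₀^∞ e^{(r₁ − r₂)(t e^{iπ/4})²} e^{iπ/4} dt (of the complex-valued function t ↦ e^{i(r₁−r₂)t²} e^{iπ/4}) converges, and its value is (1/2)√(π/(r₂ − r₁)). Consequently, the third coordinate x₃(z) = (2/√π) Re ∫₀^z e^{(r₁−r₂)w²} dw of the minimal immersion χ, evaluated along the ray γ_{π/4}(t) = t e^{iπ/4}, converges as t → ∞ to the finite value 1/√(r₂ − r₁). -/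
open Real Filter
open MeasureTheory Set intervalIntegral

set_option maxHeartbeats 800000

-- IBP bound lemma
lemma ibp_bound (a : ℂ) (c : ℝ) (hc : 0 < c) (hre : 0 ≤ a.re) (habs : c ≤ ‖a‖)
    {T S : ℝ} (hT : 0 < T) (hTS : T ≤ S) :
    ‖∫ t in T..S, Complex.exp (-a * (t:ℂ)^2)‖ ≤ 1/(c*T) := by
  have ha : a ≠ 0 := by
    intro h; rw [h] at habs; simp at habs; linarith
  have hpos : ∀ t : ℝ, t ∈ uIcc T S → 0 < t := by
    rw [uIcc_of_le hTS]
    intro t ht; linarith [ht.1]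
  set u : ℝ → ℂ := fun t => -(2*a*(t:ℂ))⁻¹ with hu_def
  set v : ℝ → ℂ := fun t => Complex.exp (-a*(t:ℂ)^2) with hv_def
  set u' : ℝ → ℂ := fun t => (2*a*(t:ℂ)^2)⁻¹ with hu'_def
  set v' : ℝ → ℂ := fun t => Complex.exp (-a*(t:ℂ)^2) * (-(2*a*(t:ℂ))) with hv'_def
  have hU : ∀ t : ℝ, t ∈ uIcc T S → HasDerivAt u (u' t) t := by
    intro t ht
    have ht0 : (t:ℂ) ≠ 0 := by exact_mod_cast (hpos t ht).ne'
    have h1 : HasDerivAt (fun z : ℂ => -(2*a*z)⁻¹) ((2*a*(t:ℂ)^2)⁻¹) (t:ℂ) := by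
      have h2 : HasDerivAt (fun z : ℂ => 2*a*z) (2*a) (t:ℂ) := by
        simpa using (hasDerivAt_id ((t:ℂ))).const_mul (2*a)
      have h3 := (h2.inv (by simp [ha, ht0])).neg
      refine h3.congr_deriv ?_
      field_simp
    exact h1.comp_ofReal
  have hV : ∀ t : ℝ, t ∈ uIcc T S → HasDerivAt v (v' t) t := by
    intro t ht
    have h1 : HasDerivAt (fun z : ℂ => Complex.exp (-a*z^2)) (Complex.exp (-a*(t:ℂ)^2) * (-(2*a*(t:ℂ)))) (t:ℂ) := by
      have h2 : HasDerivAt (fun z : ℂ => -a*z^2) (-a*(2*(t:ℂ))) (t:ℂ) := by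
        simpa using ((hasDerivAt_pow 2 ((t:ℂ))).const_mul (-a))
      have := h2.cexp
      refine this.congr_deriv ?_
      ring
    exact h1.comp_ofReal
  have hconts : ContinuousOn v' (uIcc T S) :=
    (Continuous.continuousOn (by continuity))
  have hcontu' : ContinuousOn u' (uIcc T S) := by
    apply ContinuousOn.inv₀
    · fun_prop
    · intro t ht
      have ht0 : (t:ℂ) ≠ 0 := by exact_mod_cast (hpos t ht).ne'
      simp [ha, ht0]
  have hIBP := integral_mul_deriv_eq_deriv_mul
      (fun t ht => hU t ht) (fun t ht => hV t ht)
      (hcontu'.intervalIntegrable) (hconts.intervalIntegrable)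
  -- ∫ u v' = ∫ exp(-a t²)
  have hcong : ∀ t ∈ uIcc T S, u t * v' t = Complex.exp (-a*(t:ℂ)^2) := by
    intro t ht
    have ht0 : (t:ℂ) ≠ 0 := by exact_mod_cast (hpos t ht).ne'
    simp only [hu_def, hv_def, hv'_def]
    field_simp
  have hint_eq : ∫ t in T..S, Complex.exp (-a*(t:ℂ)^2) = ∫ t in T..S, u t * v' t :=
    (integral_congr (fun t ht => (hcong t ht).symm))
  rw [hint_eq, hIBP]
  -- Now bound
  have hnormv : ∀ t : ℝ, ‖v t‖ ≤ 1 := by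
    intro t
    simp only [hv_def, Complex.norm_exp]
    rw [Real.exp_le_one_iff]
    have : (-a * (t:ℂ)^2).re = -a.re * t^2 := by
      rw [show ((t:ℂ)^2) = (((t^2 : ℝ)):ℂ) from by push_cast; ring, Complex.mul_re]
      simp [← Complex.ofReal_pow]
    rw [this]
    nlinarith [sq_nonneg t]
  have hnormu : ∀ t : ℝ, 0 < t → ‖u t‖ ≤ 1/(2*c*t) := by
    intro t ht
    simp only [hu_def, norm_neg, norm_inv, norm_mul, Complex.norm_two,
      Complex.norm_real, Real.norm_eq_abs, abs_of_pos ht]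
    rw [one_div]
    apply inv_anti₀ (by positivity)
    gcongr
  have hS : 0 < S := lt_of_lt_of_le hT hTS
  have hmemT : T ∈ uIcc T S := left_mem_uIcc
  have hmemS : S ∈ uIcc T S := right_mem_uIcc
  have b1 : ‖u S * v S‖ ≤ 1/(2*c*S) := by
    rw [norm_mul]
    calc ‖u S‖ * ‖v S‖ ≤ (1/(2*c*S)) * 1 := by
          apply mul_le_mul (hnormu S hS) (hnormv S) (norm_nonneg _) (by positivity)
      _ = 1/(2*c*S) := by ring
  have b2 : ‖u T * v T‖ ≤ 1/(2*c*T) := by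
    rw [norm_mul]
    calc ‖u T‖ * ‖v T‖ ≤ (1/(2*c*T)) * 1 := by
          apply mul_le_mul (hnormu T hT) (hnormv T) (norm_nonneg _) (by positivity)
      _ = 1/(2*c*T) := by ring
  have b3 : ‖∫ t in T..S, u' t * v t‖ ≤ (2*c)⁻¹ * (T⁻¹ - S⁻¹) := by
    have hval : ∫ t in T..S, (2*c)⁻¹ * (t:ℝ)^(-2:ℤ) = (2*c)⁻¹ * (T⁻¹ - S⁻¹) := by
      rw [intervalIntegral.integral_const_mul, integral_zpow]
      · congr 1
        simp [zpow_neg_one]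
        norm_num
        ring
      · right
        refine ⟨by norm_num, ?_⟩
        rw [uIcc_of_le hTS]
        intro hmem
        exact absurd hmem.1 (by linarith)
    have hb : ‖∫ t in T..S, u' t * v t‖ ≤ |∫ t in T..S, (2*c)⁻¹ * (t:ℝ)^(-2:ℤ)| := by
      apply intervalIntegral.norm_integral_le_abs_of_norm_le
      · apply MeasureTheory.ae_restrict_of_forall_mem measurableSet_uIoc
        intro t ht
        rw [uIoc_of_le hTS] at ht
        have ht0 : 0 < t := lt_trans hT ht.1
        rw [norm_mul]
        calc ‖u' t‖ * ‖v t‖ ≤ (2*c*t^2)⁻¹ * 1 := by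
              apply mul_le_mul _ (hnormv t) (norm_nonneg _) (by positivity)
              simp only [hu'_def, norm_inv, norm_mul, Complex.norm_two,
                norm_pow, Complex.norm_real, Real.norm_eq_abs, abs_of_pos ht0]
              apply inv_anti₀ (by positivity)
              gcongr
          _ = (2*c)⁻¹ * t^(-2:ℤ) := by
              rw [zpow_neg]
              push_cast
              field_simp
      · apply IntervalIntegrable.const_mul
        apply (ContinuousOn.intervalIntegrable)
        apply ContinuousOn.zpow₀ continuousOn_id
        intro t ht
        left
        exact ne_of_gt (hpos t ht)
    rw [hval] at hb
    have hnn : 0 ≤ (2*c)⁻¹ * (T⁻¹ - S⁻¹) := by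
      have : S⁻¹ ≤ T⁻¹ := by
        apply inv_anti₀ hT hTS
      have h2 : (0:ℝ) ≤ (2*c)⁻¹ := by positivity
      nlinarith
    rwa [abs_of_nonneg hnn] at hb
  calc ‖u S * v S - u T * v T - ∫ t in T..S, u' t * v t‖
      ≤ ‖u S * v S - u T * v T‖ + ‖∫ t in T..S, u' t * v t‖ := norm_sub_le _ _
    _ ≤ (‖u S * v S‖ + ‖u T * v T‖) + ‖∫ t in T..S, u' t * v t‖ := by
        gcongr; exact norm_sub_le _ _
    _ ≤ (1/(2*c*S) + 1/(2*c*T)) + (2*c)⁻¹ * (T⁻¹ - S⁻¹) := by gcongr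
    _ = 1/(c*T) := by field_simp; ring

lemma tail_bound {b : ℂ} {c T : ℝ} (hb : 0 < b.re) (hc : 0 < c) (habs : c ≤ ‖b‖)
    (hT : 0 < T) :
    ‖∫ t in Ioi T, Complex.exp (-b*(t:ℂ)^2)‖ ≤ 1/(c*T) := by
  have hint : IntegrableOn (fun t : ℝ => Complex.exp (-b*(t:ℂ)^2)) (Ioi T) :=
    (integrable_cexp_neg_mul_sq hb).integrableOn
  have hlim := intervalIntegral_tendsto_integral_Ioi T hint tendsto_id
  apply le_of_tendsto hlim.norm
  filter_upwards [eventually_ge_atTop T] with S hS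
  exact ibp_bound b c hc hb.le habs hT hS

lemma split_integral {b : ℂ} {T : ℝ} (hb : 0 < b.re) (hT : 0 < T) :
    (∫ t in (0:ℝ)..T, Complex.exp (-b*(t:ℂ)^2)) + (∫ t in Ioi T, Complex.exp (-b*(t:ℂ)^2))
      = ∫ t in Ioi (0:ℝ), Complex.exp (-b*(t:ℂ)^2) := by
  have hint := integrable_cexp_neg_mul_sq hb
  rw [intervalIntegral.integral_of_le hT.le]
  rw [← MeasureTheory.setIntegral_union (Ioc_disjoint_Ioi le_rfl) measurableSet_Ioi
    hint.integrableOn hint.integrableOn]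
  rw [Ioc_union_Ioi_eq_Ioi hT.le]

lemma fresnel_key (c T : ℝ) (hc : 0 < c) (hT : 0 < T) :
    ‖(∫ t in (0:ℝ)..T, Complex.exp (-((c:ℂ)*Complex.I)*(t:ℂ)^2))
      - ((π:ℂ)/((c:ℂ)*Complex.I))^(1/2:ℂ)/2‖ ≤ 1/(c*T) := by
  set X := ∫ t in (0:ℝ)..T, Complex.exp (-((c:ℂ)*Complex.I)*(t:ℂ)^2) with hX
  have key : ∀ ε : ℝ, 0 < ε →
      ‖X - ((π:ℂ)/((ε:ℂ)+(c:ℂ)*Complex.I))^(1/2:ℂ)/2‖ ≤ ε*T^3 + 1/(c*T) := by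
    intro ε hε
    set b : ℂ := (ε:ℂ) + (c:ℂ)*Complex.I with hb_def
    have hbre : b.re = ε := by simp [hb_def]
    have hbim : b.im = c := by simp [hb_def]
    have hbre' : 0 < b.re := by rw [hbre]; exact hε
    have hbabs : c ≤ ‖b‖ := by
      calc c = |b.im| := by rw [hbim, abs_of_pos hc]
        _ ≤ ‖b‖ := Complex.abs_im_le_norm b
    have gauss : ∫ t in Ioi (0:ℝ), Complex.exp (-b*(t:ℂ)^2) = ((π:ℂ)/b)^(1/2:ℂ)/2 :=
      integral_gaussian_complex_Ioi hbre'
    have hsplit := split_integral hbre' hT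
    have hXb : X - ((π:ℂ)/b)^(1/2:ℂ)/2
        = (X - ∫ t in (0:ℝ)..T, Complex.exp (-b*(t:ℂ)^2))
          - ∫ t in Ioi T, Complex.exp (-b*(t:ℂ)^2) := by
      rw [← gauss, ← hsplit]; ring
    rw [hXb]
    have bound1 : ‖X - ∫ t in (0:ℝ)..T, Complex.exp (-b*(t:ℂ)^2)‖ ≤ ε*T^2*T := by
      have hint1 : IntervalIntegrable (fun t : ℝ => Complex.exp (-((c:ℂ)*Complex.I)*(t:ℂ)^2))
          volume 0 T := (Continuous.intervalIntegrable (by continuity) _ _)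
      have hint2 : IntervalIntegrable (fun t : ℝ => Complex.exp (-b*(t:ℂ)^2))
          volume 0 T := (Continuous.intervalIntegrable (by continuity) _ _)
      rw [hX, ← intervalIntegral.integral_sub hint1 hint2]
      have := intervalIntegral.norm_integral_le_of_norm_le_const (a := 0) (b := T) (C := ε*T^2)
        (f := fun t : ℝ => Complex.exp (-((c:ℂ)*Complex.I)*(t:ℂ)^2) - Complex.exp (-b*(t:ℂ)^2)) ?_
      · calc ‖_‖ ≤ ε*T^2 * |T - 0| := this
          _ = ε*T^2*T := by rw [sub_zero, abs_of_pos hT]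
      · intro t ht
        rw [uIoc_of_le hT.le] at ht
        have ht0 : 0 < t := ht.1
        have htT : t ≤ T := ht.2
        show ‖Complex.exp (-((c:ℂ)*Complex.I)*(t:ℂ)^2) - Complex.exp (-b*(t:ℂ)^2)‖ ≤ ε*T^2
        have hexp : Complex.exp (-b*(t:ℂ)^2)
            = Complex.exp (-((c:ℂ)*Complex.I)*(t:ℂ)^2) * Complex.exp (-(ε:ℂ)*(t:ℂ)^2) := by
          rw [← Complex.exp_add]; congr 1; rw [hb_def]; ring
        rw [hexp, ← mul_one_sub, norm_mul]
        have h1 : ‖Complex.exp (-((c:ℂ)*Complex.I)*(t:ℂ)^2)‖ = 1 := by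
          have hre0 : (-((c:ℂ) * Complex.I) * (t:ℂ) ^ 2).re = 0 := by
            simp only [Complex.mul_re, Complex.neg_re, Complex.neg_im, Complex.mul_im,
              Complex.ofReal_re, Complex.ofReal_im, Complex.I_re, Complex.I_im, pow_two]
            ring
          rw [Complex.norm_exp, hre0, Real.exp_zero]
        have h2 : ‖1 - Complex.exp (-(ε:ℂ)*(t:ℂ)^2)‖ ≤ ε*T^2 := by
          rw [show (-(ε:ℂ)*(t:ℂ)^2) = (((-(ε*t^2):ℝ)):ℂ) from by push_cast; ring]
          rw [← Complex.ofReal_exp, show (1:ℂ) = ((1:ℝ):ℂ) from by norm_num,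
            ← Complex.ofReal_sub, Complex.norm_real, Real.norm_eq_abs]
          have hle : Real.exp (-(ε*t^2)) ≤ 1 := by
            rw [Real.exp_le_one_iff]; nlinarith
          have hge : 1 - ε*t^2 ≤ Real.exp (-(ε*t^2)) := by
            have := Real.add_one_le_exp (-(ε*t^2))
            linarith
          rw [abs_of_nonneg (by linarith)]
          have ht2 : t^2 ≤ T^2 := by nlinarith
          have := mul_le_mul_of_nonneg_left ht2 hε.le
          linarith
        calc ‖Complex.exp (-((c:ℂ)*Complex.I)*(t:ℂ)^2)‖ * ‖1 - Complex.exp (-(ε:ℂ)*(t:ℂ)^2)‖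
            = ‖1 - Complex.exp (-(ε:ℂ)*(t:ℂ)^2)‖ := by rw [h1, one_mul]
          _ ≤ ε*T^2 := h2
    have bound2 : ‖∫ t in Ioi T, Complex.exp (-b*(t:ℂ)^2)‖ ≤ 1/(c*T) :=
      tail_bound hbre' hc hbabs hT
    calc ‖(X - ∫ t in (0:ℝ)..T, Complex.exp (-b*(t:ℂ)^2))
          - ∫ t in Ioi T, Complex.exp (-b*(t:ℂ)^2)‖
        ≤ ‖X - ∫ t in (0:ℝ)..T, Complex.exp (-b*(t:ℂ)^2)‖
          + ‖∫ t in Ioi T, Complex.exp (-b*(t:ℂ)^2)‖ := norm_sub_le _ _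
      _ ≤ ε*T^2*T + 1/(c*T) := by gcongr
      _ = ε*T^3 + 1/(c*T) := by ring
  -- take ε → 0⁺
  have hcI : ((c:ℂ)*Complex.I) ≠ 0 := by
    simp [Complex.I_ne_zero, Complex.ofReal_ne_zero, hc.ne']
  have hcont : Tendsto (fun ε : ℝ => ‖X - ((π:ℂ)/((ε:ℂ)+(c:ℂ)*Complex.I))^(1/2:ℂ)/2‖)
      (nhdsWithin 0 (Ioi 0)) (nhds ‖X - ((π:ℂ)/((c:ℂ)*Complex.I))^(1/2:ℂ)/2‖) := by
    have hinner : Tendsto (fun ε : ℝ => (π:ℂ)/((ε:ℂ)+(c:ℂ)*Complex.I))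
        (nhdsWithin 0 (Ioi 0)) (nhds ((π:ℂ)/((c:ℂ)*Complex.I))) := by
      have : ContinuousAt (fun ε : ℝ => (π:ℂ)/((ε:ℂ)+(c:ℂ)*Complex.I)) 0 := by
        apply ContinuousAt.div continuousAt_const
        · fun_prop
        · simp [hcI]
      simpa using this.continuousWithinAt.tendsto
    have hzval : (π:ℂ)/((c:ℂ)*Complex.I) = ((π/c : ℝ):ℂ) * (-Complex.I) := by
      rw [div_eq_mul_inv, mul_inv, Complex.inv_I]
      push_cast
      field_simp
    have hslit : ((π:ℂ)/((c:ℂ)*Complex.I)) ∈ Complex.slitPlane := by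
      rw [Complex.mem_slitPlane_iff]
      right
      rw [hzval]
      have him : (((π/c:ℝ):ℂ) * (-Complex.I)).im = -(π/c) := by simp
      rw [him]
      have hd : 0 < π/c := div_pos pi_pos hc
      exact ne_of_lt (by linarith)
    have hcpow : ContinuousAt (fun z : ℂ => z ^ (1/2:ℂ)) ((π:ℂ)/((c:ℂ)*Complex.I)) :=
      continuousAt_cpow_const hslit
    exact ((hcpow.tendsto.comp hinner).div_const 2).const_sub X |>.norm
  have hrhs : Tendsto (fun ε : ℝ => ε*T^3 + 1/(c*T)) (nhdsWithin 0 (Ioi 0))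
      (nhds (1/(c*T))) := by
    have : ContinuousAt (fun ε : ℝ => ε*T^3 + 1/(c*T)) 0 := by fun_prop
    have h0 : (fun ε : ℝ => ε*T^3 + 1/(c*T)) 0 = 1/(c*T) := by norm_num
    simpa [h0] using this.continuousWithinAt.tendsto
  apply le_of_tendsto_of_tendsto hcont hrhs
  filter_upwards [self_mem_nhdsWithin] with ε hε
  exact key ε hε

lemma fresnel_limit (c : ℝ) (hc : 0 < c) :
    Tendsto (fun T : ℝ => ∫ t in (0:ℝ)..T, Complex.exp (-((c:ℂ)*Complex.I)*(t:ℂ)^2))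
      atTop (nhds (((π:ℂ)/((c:ℂ)*Complex.I))^(1/2:ℂ)/2)) := by
  rw [tendsto_iff_norm_sub_tendsto_zero]
  apply squeeze_zero' (g := fun T : ℝ => 1/(c*T))
  · filter_upwards with T using norm_nonneg _
  · filter_upwards [eventually_gt_atTop (0:ℝ)] with T hT
    exact fresnel_key c T hc hT
  · have h1 : Tendsto (fun T : ℝ => c*T) atTop atTop :=
      tendsto_id.const_mul_atTop hc
    have := h1.inv_tendsto_atTop
    rw [show (fun T : ℝ => c*T)⁻¹ = fun T : ℝ => 1/(c*T) from by funext T; simp [one_div]] at this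
    exact this

lemma cpow_val (c : ℝ) (hc : 0 < c) :
    ((π:ℂ)/((c:ℂ)*Complex.I))^(1/2:ℂ)
      = (Real.sqrt (π/c) : ℂ) * Complex.exp (-(((π:ℝ)/4 : ℝ):ℂ) * Complex.I) := by
  have hd : 0 < π/c := div_pos pi_pos hc
  have hzval : (π:ℂ)/((c:ℂ)*Complex.I) = ((π/c : ℝ):ℂ) * (-Complex.I) := by
    rw [div_eq_mul_inv, mul_inv, Complex.inv_I]
    push_cast
    field_simp
  have hz0 : (π:ℂ)/((c:ℂ)*Complex.I) ≠ 0 := by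
    rw [hzval]
    simp only [mul_ne_zero_iff, Complex.ofReal_ne_zero, neg_ne_zero]
    exact ⟨hd.ne', Complex.I_ne_zero⟩
  rw [Complex.cpow_def_of_ne_zero hz0]
  have hlog : Complex.log ((π:ℂ)/((c:ℂ)*Complex.I))
      = ((Real.log (π/c) : ℝ):ℂ) - (((π:ℝ)/2 : ℝ):ℂ)*Complex.I := by
    apply Complex.ext
    · rw [Complex.log_re]
      rw [hzval]
      simp [abs_of_pos pi_pos, abs_of_pos hc, abs_of_pos hd]
    · rw [Complex.log_im]
      rw [hzval, Complex.arg_real_mul _ hd, Complex.arg_neg_I]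
      simp
  rw [hlog]
  have hexp : (((Real.log (π/c) : ℝ):ℂ) - (((π:ℝ)/2 : ℝ):ℂ)*Complex.I) * (1/2:ℂ)
      = ((Real.log (π/c)/2 : ℝ):ℂ) + (-(((π:ℝ)/4 : ℝ):ℂ) * Complex.I) := by
    push_cast
    ring
  rw [hexp, Complex.exp_add]
  congr 1
  rw [← Complex.ofReal_exp]
  norm_cast
  rw [Real.sqrt_eq_rpow, Real.rpow_def_of_pos hd]
  ring_nf

/-- **Convergence of the third coordinate along the diagonal ray (Example A.2).**
Let `0 < r₁ < r₂`.  The improper integral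
`∫₀^∞ e^{(r₁-r₂)(t e^{iπ/4})²} e^{iπ/4} dt` (a Fresnel-type integral) converges and
equals `(1/2)√(π/(r₂-r₁))`.  Consequently, the third coordinate
`x₃(z) = (2/√π) Re ∫₀^z e^{(r₁-r₂)w²} dw` of the minimal immersion `χ`, evaluated
along the ray `γ_{π/4}(t) = t e^{iπ/4}`, converges as `t → ∞` to the finite value
`1/√(r₂-r₁)`. -/
theorem fresnel_third_coordinate_converges (r₁ r₂ : ℝ) (h1 : 0 < r₁) (h12 : r₁ < r₂) :
    Tendsto (fun T : ℝ => ∫ t in (0:ℝ)..T,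
        Complex.exp (((r₁ : ℂ) - r₂) * (t * Complex.exp (π * Complex.I / 4)) ^ 2) *
          Complex.exp (π * Complex.I / 4))
      atTop (nhds ((1 / 2 * Real.sqrt (π / (r₂ - r₁)) : ℝ) : ℂ)) ∧
    Tendsto (fun T : ℝ =>
        2 / Real.sqrt π * (∫ t in (0:ℝ)..T,
          Complex.exp (((r₁ : ℂ) - r₂) * (t * Complex.exp (π * Complex.I / 4)) ^ 2) *
            Complex.exp (π * Complex.I / 4)).re)
      atTop (nhds (1 / Real.sqrt (r₂ - r₁))) := by
  set c : ℝ := r₂ - r₁ with hc_def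
  have hc : 0 < c := by rw [hc_def]; linarith
  set K : ℂ := Complex.exp (π * Complex.I / 4) with hK_def
  have hK2 : K^2 = Complex.I := by
    rw [hK_def, sq, ← Complex.exp_add,
      show ((π:ℂ) * Complex.I / 4 + (π:ℂ) * Complex.I / 4) = (((π/2:ℝ)):ℂ) * Complex.I
        from by push_cast; ring,
      Complex.exp_mul_I, ← Complex.ofReal_cos, ← Complex.ofReal_sin,
      Real.cos_pi_div_two, Real.sin_pi_div_two]
    simp
  have hpt : ∀ t : ℝ, Complex.exp (((r₁:ℂ)-r₂)*((t:ℂ)*K)^2)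
      = Complex.exp (-((c:ℂ)*Complex.I)*(t:ℂ)^2) := by
    intro t
    have harg : ((r₁:ℂ)-r₂)*((t:ℂ)*K)^2 = -((c:ℂ)*Complex.I)*(t:ℂ)^2 := by
      rw [mul_pow, hK2, hc_def]
      push_cast
      ring
    rw [harg]
  have hinteq : ∀ T : ℝ, (∫ t in (0:ℝ)..T, Complex.exp (((r₁:ℂ)-r₂)*((t:ℂ)*K)^2) * K)
      = (∫ t in (0:ℝ)..T, Complex.exp (-((c:ℂ)*Complex.I)*(t:ℂ)^2)) * K := by
    intro T
    rw [← intervalIntegral.integral_mul_const]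
    exact intervalIntegral.integral_congr (fun t _ => by rw [hpt t])
  have hval : ((π:ℂ)/((c:ℂ)*Complex.I))^(1/2:ℂ)/2 * K
      = ((1 / 2 * Real.sqrt (π / (r₂ - r₁)) : ℝ) : ℂ) := by
    rw [cpow_val c hc]
    have hprod : Complex.exp (-(((π:ℝ)/4 : ℝ):ℂ) * Complex.I) * K = 1 := by
      rw [hK_def, ← Complex.exp_add,
        show (-(((π:ℝ)/4 : ℝ):ℂ) * Complex.I + (π:ℂ) * Complex.I / 4) = 0 from by push_cast; ring,
        Complex.exp_zero]
    rw [div_mul_eq_mul_div, mul_assoc, hprod, mul_one, ← hc_def]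
    push_cast
    ring
  have part1 : Tendsto (fun T : ℝ => ∫ t in (0:ℝ)..T,
      Complex.exp (((r₁:ℂ)-r₂)*((t:ℂ)*K)^2) * K)
      atTop (nhds ((1 / 2 * Real.sqrt (π / (r₂ - r₁)) : ℝ) : ℂ)) := by
    have hlim := (fresnel_limit c hc).mul_const K
    rw [hval] at hlim
    exact hlim.congr (fun T => (hinteq T).symm)
  refine ⟨part1, ?_⟩
  have h2 := (Complex.continuous_re.tendsto _).comp part1
  have h3 := h2.const_mul (2/Real.sqrt π)
  have hfin : 2/Real.sqrt π * (1/2*Real.sqrt (π/c)) = 1/Real.sqrt c := by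
    rw [Real.sqrt_div pi_pos.le]
    have hs : Real.sqrt π ≠ 0 := (Real.sqrt_pos.mpr pi_pos).ne'
    field_simp
  rw [show (1:ℝ)/Real.sqrt c = 2/Real.sqrt π * (1/2*Real.sqrt (π/c)) from hfin.symm]
  simpa [Complex.ofReal_re] using h3
end
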